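/- Let b: ℝ² → ℝ², x₀, v, f be as follows: b is C³, b₀ = b(x₀) ≠ 0, ‖v‖ = 1, and f(t) = ‖b(x₀ + tv)‖ − b(x₀ + tv)·v. Then f''(0) = (‖Jv‖²‖b₀‖² − (b₀ᵀJv)²)/‖b₀‖³ + (b₀/‖b₀‖ − v)ᵀ H, where J is the Jacobian of b at x₀ and H is the vector with components vᵀ(∇∇bᵢ(x₀))v for i = 1, 2. -/

import Mathlib

open scoped RealInnerProductSpace

set_option maxHeartbeats 1000000 in
/-- Second derivative at `0` of the geometric-action integrand along a line
segment (Eq. (d2)). -/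
theorem lineIntegrand_second_deriv_at_zero
    (b : EuclideanSpace ℝ (Fin 2) → EuclideanSpace ℝ (Fin 2))
    (hb : ContDiff ℝ 3 b) (x₀ v : EuclideanSpace ℝ (Fin 2))
    (hb0 : b x₀ ≠ 0) (hv : ‖v‖ = 1) :
    deriv (deriv (fun t : ℝ => ‖b (x₀ + t • v)‖ - ⟪b (x₀ + t • v), v⟫)) 0 =
      (‖(fderiv ℝ b x₀) v‖ ^ 2 * ‖b x₀‖ ^ 2 - (⟪b x₀, (fderiv ℝ b x₀) v⟫) ^ 2) /
        ‖b x₀‖ ^ 3 +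
      ⟪(‖b x₀‖)⁻¹ • b x₀ - v, ((fderiv ℝ (fderiv ℝ b) x₀) v) v⟫ := by
  have hx0 : x₀ + (0:ℝ) • v = x₀ := by simp
  have hbd : Differentiable ℝ b := hb.differentiable (by norm_num)
  have hpath : ∀ t : ℝ, HasDerivAt (fun s : ℝ => x₀ + s • v) v t := by
    intro t
    simpa using ((hasDerivAt_id t).smul_const v).const_add x₀
  have hc : ∀ t : ℝ, HasDerivAt (fun s => b (x₀ + s • v))
      (fderiv ℝ b (x₀ + t • v) v) t := by
    intro t
    exact (hbd (x₀ + t • v)).hasFDerivAt.comp_hasDerivAt t (hpath t)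
  have hb' : Differentiable ℝ (fderiv ℝ b) :=
    (hb.fderiv_right (m := 2) (by norm_num)).differentiable (by norm_num)
  have hJ : HasDerivAt (fun t : ℝ => fderiv ℝ b (x₀ + t • v))
      (fderiv ℝ (fderiv ℝ b) x₀ v) 0 := by
    have := (hb' (x₀ + (0:ℝ) • v)).hasFDerivAt.comp_hasDerivAt 0 (hpath 0)
    rw [hx0] at this; exact this
  have hc' : HasDerivAt (fun t : ℝ => fderiv ℝ b (x₀ + t • v) v)
      ((fderiv ℝ (fderiv ℝ b) x₀ v) v) 0 := by
    simpa using hJ.clm_apply (hasDerivAt_const 0 v)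
  -- eventual nonvanishing
  have hcontc : Continuous fun t : ℝ => b (x₀ + t • v) :=
    hb.continuous.comp (by continuity)
  have hne : ∀ᶠ t in nhds (0:ℝ), b (x₀ + t • v) ≠ 0 :=
    hcontc.continuousAt.eventually_ne (by simpa [hx0] using hb0)
  -- first derivative formula
  have hf' : ∀ t : ℝ, b (x₀ + t • v) ≠ 0 →
      HasDerivAt (fun t : ℝ => ‖b (x₀ + t • v)‖ - ⟪b (x₀ + t • v), v⟫)
        (⟪fderiv ℝ b (x₀ + t • v) v, b (x₀ + t • v)⟫ / ‖b (x₀ + t • v)‖ -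
          ⟪fderiv ℝ b (x₀ + t • v) v, v⟫) t := by
    intro t ht
    have hip : ⟪b (x₀ + t • v), b (x₀ + t • v)⟫ ≠ 0 := inner_self_ne_zero.2 ht
    have hnorm : HasDerivAt (fun s : ℝ => ‖b (x₀ + s • v)‖)
        ((⟪b (x₀ + t • v), fderiv ℝ b (x₀ + t • v) v⟫ +
          ⟪fderiv ℝ b (x₀ + t • v) v, b (x₀ + t • v)⟫) /
          (2 * Real.sqrt ⟪b (x₀ + t • v), b (x₀ + t • v)⟫)) t := by
      have h1 := (((hc t).inner ℝ (hc t)).sqrt hip)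
      have heq : (fun s : ℝ => Real.sqrt ⟪b (x₀ + s • v), b (x₀ + s • v)⟫) =
          fun s : ℝ => ‖b (x₀ + s • v)‖ := by
        funext s
        rw [real_inner_self_eq_norm_mul_norm, Real.sqrt_mul_self (norm_nonneg _)]
      rwa [heq] at h1
    have hin : HasDerivAt (fun s : ℝ => ⟪b (x₀ + s • v), v⟫)
        (⟪b (x₀ + t • v), (0:EuclideanSpace ℝ (Fin 2))⟫ +
          ⟪fderiv ℝ b (x₀ + t • v) v, v⟫) t :=
      (hc t).inner ℝ (hasDerivAt_const t v)
    have hns : Real.sqrt ⟪b (x₀ + t • v), b (x₀ + t • v)⟫ = ‖b (x₀ + t • v)‖ := by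
      rw [real_inner_self_eq_norm_mul_norm, Real.sqrt_mul_self (norm_nonneg _)]
    have hN : ‖b (x₀ + t • v)‖ ≠ 0 := norm_ne_zero_iff.2 ht
    refine (hnorm.sub hin).congr_deriv ?_
    rw [hns, real_inner_comm (b (x₀ + t • v)) (fderiv ℝ b (x₀ + t • v) v)]
    simp only [inner_zero_right, zero_add]
    field_simp
    ring
  have hev : deriv (fun t : ℝ => ‖b (x₀ + t • v)‖ - ⟪b (x₀ + t • v), v⟫) =ᶠ[nhds (0:ℝ)]
      fun t : ℝ => ⟪fderiv ℝ b (x₀ + t • v) v, b (x₀ + t • v)⟫ / ‖b (x₀ + t • v)‖ -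
        ⟪fderiv ℝ b (x₀ + t • v) v, v⟫ :=
    hne.mono fun t ht => (hf' t ht).deriv
  rw [hev.deriv_eq]
  -- now differentiate the explicit first-derivative function at 0
  have hN : ‖b x₀‖ ≠ 0 := norm_ne_zero_iff.2 hb0
  have hip0 : ⟪b x₀, b x₀⟫ ≠ 0 := inner_self_ne_zero.2 hb0
  have hnorm0 : HasDerivAt (fun s : ℝ => ‖b (x₀ + s • v)‖)
      (⟪fderiv ℝ b x₀ v, b x₀⟫ / ‖b x₀‖) 0 := by
    have h1 := ((hc 0).inner ℝ (hc 0)).sqrt (f := fun s : ℝ => ⟪b (x₀ + s • v), b (x₀ + s • v)⟫)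
      (by simpa [hx0] using hip0)
    have heq : (fun s : ℝ => Real.sqrt ⟪b (x₀ + s • v), b (x₀ + s • v)⟫) =
        fun s : ℝ => ‖b (x₀ + s • v)‖ := by
      funext s
      rw [real_inner_self_eq_norm_mul_norm, Real.sqrt_mul_self (norm_nonneg _)]
    rw [heq] at h1
    convert h1 using 1
    have h2 : (fun s : ℝ => ⟪b (x₀ + s • v), b (x₀ + s • v)⟫) 0 = ⟪b x₀, b x₀⟫ := by
      simp [hx0]
    rw [hx0, real_inner_self_eq_norm_mul_norm, Real.sqrt_mul_self (norm_nonneg _),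
      real_inner_comm (b x₀) (fderiv ℝ b x₀ v)]
    field_simp
    ring
  have hp : HasDerivAt (fun t : ℝ => ⟪fderiv ℝ b (x₀ + t • v) v, b (x₀ + t • v)⟫)
      (⟪fderiv ℝ b x₀ v, fderiv ℝ b x₀ v⟫ +
        ⟪(fderiv ℝ (fderiv ℝ b) x₀ v) v, b x₀⟫) 0 := by
    have := hc'.inner ℝ (hc 0)
    simpa only [hx0] using this
  have hq : HasDerivAt (fun t : ℝ => ⟪fderiv ℝ b (x₀ + t • v) v, v⟫)
      (⟪(fderiv ℝ (fderiv ℝ b) x₀ v) v, v⟫) 0 := by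
    have := hc'.inner ℝ (hasDerivAt_const (0:ℝ) v)
    simpa only [hx0, inner_zero_right, zero_add] using this
  have hdiv := (hp.div hnorm0 (by simpa [hx0] using hN)).sub hq
  erw [(hdiv.congr_deriv rfl).deriv]
  -- algebraic identity
  simp only [hx0]
  rw [inner_sub_left, real_inner_smul_left,
    real_inner_comm ((fderiv ℝ (fderiv ℝ b) x₀ v) v) (b x₀),
    real_inner_comm ((fderiv ℝ (fderiv ℝ b) x₀ v) v) v] at *
  rw [← real_inner_self_eq_norm_sq (fderiv ℝ b x₀ v)] 
  rw [real_inner_comm (b x₀) (fderiv ℝ b x₀ v)]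
  field_simp
  ring
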